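/- Let n ≥ 1 and m ≥ 2 be integers. The number of permutations σ of {1, …, n} that admit no decreasing subsequence of length m — i.e. no indices i₁ < i₂ < ⋯ < i_m with σ(i₁) > σ(i₂) > ⋯ > σ(i_m) — is at most (m−1)^{2n}. -/

import Mathlib

def lab {n : ℕ} (σ : Equiv.Perm (Fin n)) (i : Fin n) : ℕ :=
  ((Finset.univ.filter fun j => j < i ∧ σ i < σ j).attach.sup
    fun j => lab σ j.1) + 1
termination_by i.val
decreasing_by
  have h := j.2
  simp only [Finset.mem_filter] at h
  exact h.2.1

lemma lab_pos {n : ℕ} (σ : Equiv.Perm (Fin n)) (i : Fin n) : 1 ≤ lab σ i := by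
  rw [lab]; omega

lemma lab_lt {n : ℕ} (σ : Equiv.Perm (Fin n)) {i j : Fin n}
    (hij : j < i) (hσ : σ i < σ j) : lab σ j < lab σ i := by
  conv_rhs => rw [lab]
  have hm : j ∈ Finset.univ.filter fun j => j < i ∧ σ i < σ j := by
    simp [hij, hσ]
  have h2 : lab σ j ≤ ((Finset.univ.filter fun j => j < i ∧ σ i < σ j).attach.sup
      fun j => lab σ j.1) :=
    Finset.le_sup (f := fun j : {x // x ∈ Finset.univ.filter fun j => j < i ∧ σ i < σ j}
      => lab σ j.1) (Finset.mem_attach _ ⟨j, hm⟩)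
  omega

lemma lab_mono {n : ℕ} (σ : Equiv.Perm (Fin n)) {i j : Fin n}
    (hl : lab σ i = lab σ j) (hij : i < j) : σ i < σ j := by
  rcases lt_trichotomy (σ i) (σ j) with h | h | h
  · exact h
  · exact absurd (σ.injective h) (ne_of_lt hij)
  · exact absurd (lab_lt σ hij h) (by omega)

lemma lab_le_iff {n : ℕ} (σ : Equiv.Perm (Fin n)) {i j : Fin n}
    (hl : lab σ i = lab σ j) : σ i ≤ σ j ↔ i ≤ j := by
  constructor
  · intro h
    rcases lt_trichotomy i j with h' | h' | h'
    · exact le_of_lt h'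
    · exact le_of_eq h'
    · exact absurd (lab_mono σ hl.symm h') (by omega)
  · intro h
    rcases lt_or_eq_of_le h with h' | h'
    · exact le_of_lt (lab_mono σ hl h')
    · simp [h']

lemma lab_chain {n : ℕ} (σ : Equiv.Perm (Fin n)) (i : Fin n) :
    ∃ f : Fin (lab σ i) → Fin n, StrictMono f ∧
      (∀ p q, p < q → σ (f q) < σ (f p)) ∧
      (∀ p, f p ≤ i) ∧ (∀ p, σ i ≤ σ (f p)) := by
  set s := Finset.univ.filter fun j => j < i ∧ σ i < σ j with hs
  have hL : lab σ i = (s.attach.sup fun j => lab σ j.1) + 1 := by rw [lab]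
  rcases s.eq_empty_or_nonempty with he | hne
  · have h1 : lab σ i = 1 := by rw [hL, he]; simp
    refine ⟨fun _ => i, ?_, ?_, fun _ => le_refl i, fun _ => le_refl _⟩
    · intro p q hpq
      exfalso
      have hpq' : (p : ℕ) < (q : ℕ) := hpq
      have := q.2
      omega
    · intro p q hpq
      exfalso
      have hpq' : (p : ℕ) < (q : ℕ) := hpq
      have := q.2
      omega
  · obtain ⟨⟨j₀, hj₀⟩, _, hsup⟩ :=
      Finset.exists_mem_eq_sup s.attach (hne.attach) (fun j => lab σ j.1)
    have hj₀' : j₀ < i ∧ σ i < σ j₀ := by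
      have := hj₀; rw [hs, Finset.mem_filter] at this; exact this.2
    obtain ⟨hj₀i, hσj₀⟩ := hj₀'
    have hL2 : lab σ i = lab σ j₀ + 1 := by rw [hL, hsup]
    obtain ⟨g, hg1, hg2, hg3, hg4⟩ := lab_chain σ j₀
    refine ⟨fun p => if h : (p : ℕ) < lab σ j₀ then g ⟨p, h⟩ else i, ?_, ?_, ?_, ?_⟩
    · intro p q hpq
      have hpq' : (p : ℕ) < (q : ℕ) := hpq
      have h2 := p.2; have h3 := q.2
      dsimp only
      split_ifs with h4 h5 h5
      · exact hg1 (Fin.mk_lt_mk.mpr hpq')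
      · exact lt_of_le_of_lt (hg3 _) hj₀i
      · exfalso; omega
      · exfalso; omega
    · intro p q hpq
      have hpq' : (p : ℕ) < (q : ℕ) := hpq
      have h2 := p.2; have h3 := q.2
      dsimp only
      split_ifs with h4 h5 h5
      · exact hg2 _ _ (Fin.mk_lt_mk.mpr hpq')
      · exfalso; omega
      · exact lt_of_lt_of_le hσj₀ (hg4 _)
      · exfalso; omega
    · intro p
      dsimp only
      split_ifs with h4
      · exact le_of_lt (lt_of_le_of_lt (hg3 _) hj₀i)
      · exact le_refl i
    · intro p
      dsimp only
      split_ifs with h4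
      · exact le_of_lt (lt_of_lt_of_le hσj₀ (hg4 _))
      · exact le_refl _
termination_by i.val
decreasing_by exact hj₀i

lemma lab_le {n m : ℕ} (σ : Equiv.Perm (Fin n))
    (hσ : ¬ ∃ f : Fin m → Fin n, StrictMono f ∧
        ∀ i j : Fin m, i < j → σ (f j) < σ (f i)) (i : Fin n) :
    lab σ i ≤ m - 1 := by
  by_contra h
  push_neg at h
  have hm : m ≤ lab σ i := by
    rcases Nat.eq_zero_or_pos m with rfl | hm0
    · omega
    · omega
  obtain ⟨f, hf1, hf2, _, _⟩ := lab_chain σ i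
  exact hσ ⟨f ∘ Fin.castLE hm, hf1.comp (Fin.strictMono_castLE hm),
    fun p q hpq => hf2 _ _ (by simpa using hpq)⟩

theorem latyshev_bound (n m : ℕ) (hn : 1 ≤ n) (hm : 2 ≤ m) :
    Set.ncard {σ : Equiv.Perm (Fin n) |
      ¬ ∃ f : Fin m → Fin n, StrictMono f ∧
        ∀ i j : Fin m, i < j → σ (f j) < σ (f i)} ≤ (m - 1) ^ (2 * n) := by
  set S := {σ : Equiv.Perm (Fin n) |
      ¬ ∃ f : Fin m → Fin n, StrictMono f ∧
        ∀ i j : Fin m, i < j → σ (f j) < σ (f i)} with hS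
  have hm1 : 0 < m - 1 := by omega
  set Φ : Equiv.Perm (Fin n) → (Fin n → Fin (m-1)) × (Fin n → Fin (m-1)) :=
    fun σ => (fun i => ⟨min (lab σ i - 1) (m - 2), by omega⟩,
              fun v => ⟨min (lab σ (σ.symm v) - 1) (m - 2), by omega⟩) with hΦ
  have key : ∀ σ ∈ S, ∀ i, lab σ i - 1 ≤ m - 2 := by
    intro σ hσ i
    have := lab_le σ hσ i
    have := lab_pos σ i
    omega
  have hinj : Set.InjOn Φ S := by
    intro σ hσ τ hτ h
    have hA : ∀ i, lab σ i = lab τ i := by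
      intro i
      have h1 := congrFun (congrArg Prod.fst h) i
      have h2 : min (lab σ i - 1) (m-2) = min (lab τ i - 1) (m-2) := congrArg Fin.val h1
      have := key σ hσ i; have := key τ hτ i
      have := lab_pos σ i; have := lab_pos τ i
      omega
    have hB : ∀ v, lab σ (σ.symm v) = lab τ (τ.symm v) := by
      intro v
      have h1 := congrFun (congrArg Prod.snd h) v
      have h2 : min (lab σ (σ.symm v) - 1) (m-2) = min (lab τ (τ.symm v) - 1) (m-2) :=
        congrArg Fin.val h1
      have := key σ hσ (σ.symm v); have := key τ hτ (τ.symm v)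
      have := lab_pos σ (σ.symm v); have := lab_pos τ (τ.symm v)
      omega
    -- show σ = τ
    apply Equiv.ext
    intro i
    set c := lab σ i with hc
    have count : ∀ ρ : Equiv.Perm (Fin n), ∀ ii : Fin n,
        (Finset.univ.filter fun j => lab ρ j = lab ρ ii ∧ j ≤ ii).card
          = (Finset.univ.filter fun w => lab ρ (ρ.symm w) = lab ρ ii ∧ w ≤ ρ ii).card := by
      intro ρ ii
      apply Finset.card_bij (fun j _ => ρ j)
      · intro j hj
        simp only [Finset.mem_filter, Finset.mem_univ, true_and] at hj ⊢
        refine ⟨by simp [hj.1], ?_⟩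
        rw [lab_le_iff ρ (by rw [hj.1])]
        exact hj.2
      · intro a ha b hb hab
        exact ρ.injective hab
      · intro w hw
        simp only [Finset.mem_filter, Finset.mem_univ, true_and] at hw
        refine ⟨ρ.symm w, ?_, by simp⟩
        simp only [Finset.mem_filter, Finset.mem_univ, true_and]
        refine ⟨hw.1, ?_⟩
        rw [← lab_le_iff ρ (i := ρ.symm w) (j := ii) hw.1]
        simpa using hw.2
    have hcount1 := count σ i
    have hcount2 := count τ i
    rw [← hc] at hcount1
    rw [← hA i, ← hc] at hcount2
    have hposeq : (Finset.univ.filter fun j => lab σ j = c ∧ j ≤ i)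
        = (Finset.univ.filter fun j => lab τ j = c ∧ j ≤ i) := by
      apply Finset.filter_congr
      intro j _
      rw [hA j]
    have hvaleq : ∀ x : Fin n, (Finset.univ.filter fun w => lab τ (τ.symm w) = c ∧ w ≤ x)
        = (Finset.univ.filter fun w => lab σ (σ.symm w) = c ∧ w ≤ x) := by
      intro x
      apply Finset.filter_congr
      intro w _
      rw [hB w]
    rw [hvaleq] at hcount2
    rw [hposeq] at hcount1
    have hcards : (Finset.univ.filter fun w => lab σ (σ.symm w) = c ∧ w ≤ σ i).card
        = (Finset.univ.filter fun w => lab σ (σ.symm w) = c ∧ w ≤ τ i).card := by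
      rw [← hcount1, hcount2]
    have hgσ : lab σ (σ.symm (σ i)) = c := by simp [hc]
    have hgτ : lab σ (σ.symm (τ i)) = c := by rw [hB]; simp [hA i, hc]
    by_contra hne
    have contra : ∀ u v : Fin n, lab σ (σ.symm u) = c → lab σ (σ.symm v) = c → u < v →
        (Finset.univ.filter fun w => lab σ (σ.symm w) = c ∧ w ≤ u).card
          ≠ (Finset.univ.filter fun w => lab σ (σ.symm w) = c ∧ w ≤ v).card := by
      intro u v hu hv huv
      apply Nat.ne_of_lt
      apply Finset.card_lt_card
      constructor
      · intro w hw
        simp only [Finset.mem_filter, Finset.mem_univ, true_and] at hw ⊢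
        exact ⟨hw.1, le_of_lt (lt_of_le_of_lt hw.2 huv)⟩
      · intro hsub
        have hv' : v ∈ Finset.univ.filter fun w => lab σ (σ.symm w) = c ∧ w ≤ v := by
          simp [hv]
        have := hsub hv'
        simp only [Finset.mem_filter, Finset.mem_univ, true_and] at this
        exact absurd this.2 (not_le_of_gt huv)
    rcases lt_trichotomy (σ i) (τ i) with h' | h' | h'
    · exact contra _ _ hgσ hgτ h' hcards
    · exact hne h'
    · exact contra _ _ hgτ hgσ h' hcards.symm
  calc S.ncard ≤ (Set.univ : Set ((Fin n → Fin (m-1)) × (Fin n → Fin (m-1)))).ncard := by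
        exact Set.ncard_le_ncard_of_injOn Φ (fun a _ => Set.mem_univ _) hinj Set.finite_univ
    _ = (m - 1) ^ (2 * n) := by
        rw [Set.ncard_univ, Nat.card_eq_fintype_card]
        simp [Fintype.card_fun, two_mul, pow_add]
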